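/- Let V be a finite-dimensional real vector space and k ≥ 1 a natural number with k ≤ finrank V. Let Λ^k V* denote the space of alternating k-linear forms on V, and let W := V × Λ^k V*. Then the map Ω defined by Ω((v₁,α₁),…,(v_{k+1},α_{k+1})) := Σ_{j=1}^{k+1} (−1)^{j+1} α_j(v₁,…,v̂_j,…,v_{k+1}) (where v̂_j means the argument v_j is omitted) is an alternating (k+1)-linear form on W, and it is nondegenerate: if x ∈ W satisfies Ω(x, y₁, …, y_k) = 0 for all y₁, …, y_k ∈ W, then x = 0. -/

import Mathlib

open Equiv

namespace CanonMS

variable (V : Type*) [AddCommGroup V] [Module ℝ V] (k : ℕ)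

/-- The linear map sending `(v, α)` to the multilinear map on `W = V × Λ^k V*`
applying `α` to the first components. -/
noncomputable def L : (V × AlternatingMap ℝ V ℝ (Fin k)) →ₗ[ℝ]
    MultilinearMap ℝ (fun _ : Fin k => V × AlternatingMap ℝ V ℝ (Fin k)) ℝ where
  toFun x := x.2.toMultilinearMap.compLinearMap fun _ =>
    LinearMap.fst ℝ V (AlternatingMap ℝ V ℝ (Fin k))
  map_add' x y := by ext v; simp
  map_smul' c x := by ext v; simp

noncomputable def G : MultilinearMap ℝ
    (fun _ : Fin (k + 1) => V × AlternatingMap ℝ V ℝ (Fin k)) ℝ :=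
  (L V k).uncurryLeft

@[simp] lemma G_apply (y : Fin (k + 1) → V × AlternatingMap ℝ V ℝ (Fin k)) :
    G V k y = (y 0).2 fun i => (y i.succ).1 := rfl

lemma units_neg_one_pow_smul (q : ℕ) (x : ℝ) :
    ((-1 : ℤˣ) ^ q) • x = (-1 : ℝ) ^ q * x := by
  simp only [Units.smul_def, Units.val_pow_eq_pow_val, Units.val_neg, Units.val_one,
    zsmul_eq_mul]
  push_cast
  ring

lemma key (α : AlternatingMap ℝ V ℝ (Fin k)) (v : Fin (k + 1) → V) (p : Fin (k + 1)) :
    (if p = 0 then (1 : ℝ) else -1) * α (fun i => v (Equiv.swap 0 p i.succ))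
      = (-1 : ℝ) ^ (p : ℕ) * α (fun i => v (p.succAbove i)) := by
  induction p using Fin.cases with
  | zero => simp
  | succ q =>
    rw [if_neg (Fin.succ_ne_zero q)]
    have h1 : (fun i => v (Equiv.swap 0 q.succ i.succ))
        = (fun i => v (q.succ.succAbove i)) ∘ q.cycleRange := by
      funext i
      simp [Function.comp, Fin.succAbove_cycleRange]
    rw [h1, AlternatingMap.map_perm, Fin.sign_cycleRange, units_neg_one_pow_smul,
      Fin.val_succ, pow_succ]
    ring

lemma alt_apply (y : Fin (k + 1) → V × AlternatingMap ℝ V ℝ (Fin k)) :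
    MultilinearMap.alternatization (G V k) y
      = (Nat.factorial k : ℝ) * ∑ j : Fin (k + 1),
          (-1 : ℝ) ^ (j : ℕ) * (y j).2 (fun i => (y (j.succAbove i)).1) := by
  classical
  rw [MultilinearMap.alternatization_apply]
  rw [← Equiv.sum_comp (Equiv.Perm.decomposeFin (n := k)).symm
      (fun σ => Equiv.Perm.sign σ • (G V k).domDomCongr σ y)]
  rw [Fintype.sum_prod_type, Finset.mul_sum]
  refine Finset.sum_congr rfl fun p _ => ?_
  have hσ : ∀ e : Equiv.Perm (Fin k),
      Equiv.Perm.sign (Equiv.Perm.decomposeFin.symm (p, e)) •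
        (G V k).domDomCongr (Equiv.Perm.decomposeFin.symm (p, e)) y
      = (-1 : ℝ) ^ (p : ℕ) * (y p).2 (fun i => (y (p.succAbove i)).1) := by
    intro e
    rw [MultilinearMap.domDomCongr_apply, G_apply, Equiv.Perm.decomposeFin.symm_sign]
    simp only [Equiv.Perm.decomposeFin_symm_apply_zero,
      Equiv.Perm.decomposeFin_symm_apply_succ]
    have h2 : (fun i => (y (Equiv.swap 0 p (e i).succ)).1)
        = (fun i => (y (Equiv.swap 0 p i.succ)).1) ∘ e := rfl
    rw [h2, AlternatingMap.map_perm]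
    rw [smul_smul, mul_assoc, Int.units_mul_self, mul_one]
    rw [← key V k (y p).2 (fun m => (y m).1) p]
    rcases eq_or_ne p 0 with h | h <;> simp [h, Units.smul_def]
  rw [Finset.sum_congr rfl fun e _ => hσ e, Finset.sum_const, Finset.card_univ,
    Fintype.card_perm]
  simp [nsmul_eq_mul]

/-- The canonical multisymplectic form. -/
noncomputable def Om : AlternatingMap ℝ (V × AlternatingMap ℝ V ℝ (Fin k)) ℝ (Fin (k + 1)) :=
  (Nat.factorial k : ℝ)⁻¹ • MultilinearMap.alternatization (G V k)

lemma Om_apply (y : Fin (k + 1) → V × AlternatingMap ℝ V ℝ (Fin k)) :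
    Om V k y = ∑ j : Fin (k + 1),
      (-1 : ℝ) ^ (j : ℕ) * (y j).2 (fun i => (y (j.succAbove i)).1) := by
  have h : Om V k y = (Nat.factorial k : ℝ)⁻¹ * MultilinearMap.alternatization (G V k) y := rfl
  rw [h, alt_apply, inv_mul_cancel_left₀ (by exact_mod_cast k.factorial_ne_zero)]

/-- Given `v ≠ 0` and `m + 1 ≤ finrank V`, there is an alternating `(m+1)`-form
taking value `1` on a tuple starting with `v`. -/
lemma exists_form [FiniteDimensional ℝ V] (m : ℕ) (hm : m + 1 ≤ Module.finrank ℝ V)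
    (v : V) (hv : v ≠ 0) :
    ∃ (β : AlternatingMap ℝ V ℝ (Fin (m + 1))) (w : Fin m → V), β (Fin.cons v w) = 1 := by
  classical
  have hli : LinearIndepOn ℝ id ({v} : Set V) := LinearIndepOn.singleton hv
  let b := Module.Basis.extend hli
  haveI : Fintype (hli.extend (Set.subset_univ ({v} : Set V))) :=
    FiniteDimensional.fintypeBasisIndex b
  have hcard : m + 1 ≤ Fintype.card (hli.extend (Set.subset_univ ({v} : Set V))) := by
    rw [← Module.finrank_eq_card_basis b]; exact hm
  let i₀ : hli.extend (Set.subset_univ ({v} : Set V)) :=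
    ⟨v, hli.subset_extend _ rfl⟩
  have hemb : Nonempty (Fin m ↪ {i : hli.extend (Set.subset_univ ({v} : Set V)) // i ≠ i₀}) := by
    apply Function.Embedding.nonempty_of_card_le
    rw [Fintype.card_fin]
    have hc : Fintype.card {i : hli.extend (Set.subset_univ ({v} : Set V)) // i ≠ i₀}
        = Fintype.card (hli.extend (Set.subset_univ ({v} : Set V)))
          - Fintype.card {i : hli.extend (Set.subset_univ ({v} : Set V)) // i = i₀} := by
      simpa using (Fintype.card_subtype_compl (fun i => i = i₀))
    rw [hc, Fintype.card_subtype_eq]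
    omega
  obtain ⟨e⟩ := hemb
  let f : Fin (m + 1) → hli.extend (Set.subset_univ ({v} : Set V)) :=
    Fin.cases i₀ fun t => (e t).1
  have hf0 : f 0 = i₀ := rfl
  have hfs : ∀ t, f t.succ = (e t).1 := fun t => by simp [f]
  have hf : Function.Injective f := by
    intro a c hac
    rcases Fin.eq_zero_or_eq_succ a with rfl | ⟨a', rfl⟩ <;>
      rcases Fin.eq_zero_or_eq_succ c with rfl | ⟨c', rfl⟩
    · rfl
    · rw [hf0, hfs] at hac; exact absurd hac.symm (e c').2
    · rw [hf0, hfs] at hac; exact absurd hac (e a').2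
    · rw [hfs, hfs] at hac
      rw [e.injective (Subtype.ext hac)]
  let π : V →ₗ[ℝ] (Fin (m + 1) → ℝ) := LinearMap.pi fun i => b.coord (f i)
  refine ⟨Matrix.detRowAlternating.compLinearMap π, fun t => b (f t.succ), ?_⟩
  have hcons : Fin.cons v (fun t => b (f t.succ)) = fun j => b (f j) := by
    funext j
    rcases Fin.eq_zero_or_eq_succ j with rfl | ⟨j', rfl⟩
    · rw [Fin.cons_zero, hf0]
      exact (Module.Basis.extend_apply_self hli i₀).symm
    · rw [Fin.cons_succ]
  rw [hcons, AlternatingMap.compLinearMap_apply]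
  have hmat : (fun j => π (b (f j))) = (1 : Matrix (Fin (m + 1)) (Fin (m + 1)) ℝ) := by
    funext j i
    simp only [π, LinearMap.pi_apply, Module.Basis.coord_apply, Module.Basis.repr_self_apply,
      Matrix.one_apply]
    simp [hf.eq_iff, eq_comm]
  rw [hmat]
  show Matrix.det (1 : Matrix (Fin (m + 1)) (Fin (m + 1)) ℝ) = 1
  exact Matrix.det_one

end CanonMS

/-- On `W = V × Λ^k V*` (with `V` finite-dimensional real and
`1 ≤ k ≤ finrank V`), the formula
`Ω((v₁,α₁),…,(v_{k+1},α_{k+1})) = Σ_j (−1)^{j+1} α_j(v₁,…,v̂_j,…,v_{k+1})`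
defines an alternating `(k+1)`-linear form on `W`, and this form is nondegenerate: if
`Ω(x, y₁, …, y_k) = 0` for all `y₁, …, y_k ∈ W`, then `x = 0`. -/
theorem canonical_multisymplectic_nondegenerate
    (V : Type*) [AddCommGroup V] [Module ℝ V] [FiniteDimensional ℝ V]
    (k : ℕ) (hk : 1 ≤ k) (hkV : k ≤ Module.finrank ℝ V) :
    ∃ Ω : AlternatingMap ℝ (V × AlternatingMap ℝ V ℝ (Fin k)) ℝ (Fin (k + 1)),
      (∀ y : Fin (k + 1) → V × AlternatingMap ℝ V ℝ (Fin k),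
        Ω y = ∑ j : Fin (k + 1),
          (-1 : ℝ) ^ (j : ℕ) * (y j).2 (fun i => (y (j.succAbove i)).1)) ∧
      (∀ x : V × AlternatingMap ℝ V ℝ (Fin k),
        (∀ ys : Fin k → V × AlternatingMap ℝ V ℝ (Fin k), Ω (Fin.cons x ys) = 0) →
        x = 0) := by
  classical
  obtain ⟨m, rfl⟩ : ∃ m, k = m + 1 := ⟨k - 1, (Nat.succ_pred_eq_of_pos hk).symm⟩
  refine ⟨CanonMS.Om V (m + 1), CanonMS.Om_apply V (m + 1), ?_⟩
  intro x hx
  have h2 : x.2 = 0 := by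
    ext w
    have h := hx fun i => (w i, 0)
    rw [CanonMS.Om_apply, Fin.sum_univ_succ] at h
    simpa using h
  have h1 : x.1 = 0 := by
    by_contra hv
    obtain ⟨β, w, hβ⟩ := CanonMS.exists_form V m hkV x.1 hv
    set ys : Fin (m + 1) → V × AlternatingMap ℝ V ℝ (Fin (m + 1)) :=
      Fin.cons (0, β) fun t => (w t, 0) with hys
    have h := hx ys
    rw [CanonMS.Om_apply, Fin.sum_univ_succ, Fin.sum_univ_succ] at h
    have harg : (fun i => ((Fin.cons x ys : Fin (m + 2) → V × AlternatingMap ℝ V ℝ (Fin (m + 1))) (((0 : Fin (m + 1)).succ).succAbove i)).1)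
        = Fin.cons x.1 w := by
      funext i
      rcases Fin.eq_zero_or_eq_succ i with rfl | ⟨s, rfl⟩
      · simp [Fin.succ_succAbove_zero]
      · simp [Fin.succ_succAbove_succ, hys]
    rw [harg] at h
    simp [h2, hys, hβ] at h
  have : x = (0, 0) := Prod.ext h1 h2
  exact this
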